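/- Let $\tau$ be a $d$-dimensional permutation of size $k$ and $\sigma$ a $d$-dimensional permutation of size $n$ with $k \le n$. Then the pattern frequency of $\tau$ in $\sigma$ and the pattern frequency of $\tau$ in the permuton $\mu_\sigma$ associated to $\sigma$ differ by at most $\binom{k}{2}/n$, i.e., $|\mathrm{freq}(\tau,\sigma) - \mathrm{freq}(\tau,\mu_\sigma)| \le \frac{1}{n}\binom{k}{2}$. -/

import Mathlib

open MeasureTheory

/-- A `(d+1)`-dimensional permutation of size `n`: a map `σ : [n] → [n]^d` whose
restriction to each coordinate is a permutation of `[n]`. -/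
def IsDPerm {d n : ℕ} (σ : Fin n → Fin d → Fin n) : Prop :=
  ∀ j : Fin d, Function.Bijective fun i => σ i j

/-- `τ` is the pattern of `σ` on the index set given by the strictly monotone map `e`:
the values of `σ` on the range of `e` are in the same relative order as `τ`. -/
def IsPatternOf {d k n : ℕ} (τ : Fin k → Fin d → Fin k) (σ : Fin n → Fin d → Fin n)
    (e : Fin k → Fin n) : Prop :=
  ∀ (a b : Fin k) (j : Fin d), τ a j < τ b j ↔ σ (e a) j < σ (e b) j

/-- The pattern frequency `freq(τ, σ)`: the fraction of `k`-element subsets of `[n]`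
(equivalently, strictly monotone maps `Fin k → Fin n`) on which the pattern of `σ` is `τ`. -/
noncomputable def freqPerm {d k n : ℕ} (τ : Fin k → Fin d → Fin k)
    (σ : Fin n → Fin d → Fin n) : ℝ :=
  (Nat.card {e : Fin k → Fin n // StrictMono e ∧ IsPatternOf τ σ e} : ℝ) / (n.choose k : ℝ)

/-- The `k` points `x` (in `([0,1]^{d+1})^k`) realize the pattern `τ`: after sorting the
points by their first coordinate, the relative order of the remaining coordinates is `τ`. -/
def hasPattern {d k : ℕ} (τ : Fin k → Fin d → Fin k) (x : Fin k → (Fin (d+1) → ℝ)) : Prop :=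
  ∃ g : Equiv.Perm (Fin k),
    (∀ a b : Fin k, a < b ↔ x (g a) 0 < x (g b) 0) ∧
    (∀ (a b : Fin k) (j : Fin d), τ a j < τ b j ↔ x (g a) j.succ < x (g b) j.succ)

/-- The pattern frequency `freq(τ, μ)` of `τ` in a measure `μ` on `[0,1]^{d+1}`: the
probability that `k` i.i.d. points sampled from `μ` are in relative order `τ`. -/
noncomputable def freqMeas {d k : ℕ} (τ : Fin k → Fin d → Fin k)
    (μ : Measure (Fin (d+1) → ℝ)) : ℝ :=
  ((Measure.pi fun _ : Fin k => μ) {x | hasPattern τ x}).toReal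

/-- The permuton `μ_σ` associated to a `(d+1)`-dimensional permutation `σ` of size `n`:
the measure on `[0,1]^{d+1}` with density `n^d 𝟙{σ(⌈n x₁⌉) = (⌈n x₂⌉, …, ⌈n x_{d+1}⌉)}`. -/
noncomputable def permMeasure {d n : ℕ} (σ : Fin n → Fin d → Fin n) :
    Measure (Fin (d+1) → ℝ) :=
  ((n : ENNReal) ^ d) • (volume.restrict {x : Fin (d+1) → ℝ |
    (∀ i, x i ∈ Set.Ioc (0:ℝ) 1) ∧
    ∃ i : Fin n, ⌈(n : ℝ) * x 0⌉₊ = (i : ℕ) + 1 ∧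
      ∀ j : Fin d, ⌈(n : ℝ) * x j.succ⌉₊ = (σ i j : ℕ) + 1})

namespace PermutonAux

open Set

variable {d k n : ℕ}

/-- index of cell `i` in coordinate `l` -/
def cellIdx (σ : Fin n → Fin d → Fin n) (i : Fin n) : Fin (d+1) → ℕ :=
  Fin.cases (i : ℕ) (fun j => (σ i j : ℕ))

def cell (σ : Fin n → Fin d → Fin n) (i : Fin n) : Set (Fin (d+1) → ℝ) :=
  Set.pi Set.univ fun l => Set.Ioc ((cellIdx σ i l : ℝ) / n) (((cellIdx σ i l : ℝ) + 1) / n)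

lemma cellIdx_zero (σ : Fin n → Fin d → Fin n) (i : Fin n) : cellIdx σ i 0 = (i : ℕ) := rfl

lemma cellIdx_succ (σ : Fin n → Fin d → Fin n) (i : Fin n) (j : Fin d) :
    cellIdx σ i j.succ = (σ i j : ℕ) := rfl

lemma cellIdx_lt (σ : Fin n → Fin d → Fin n) (i : Fin n) (l : Fin (d+1)) :
    cellIdx σ i l < n := by
  induction l using Fin.cases with
  | zero => exact i.isLt
  | succ j => exact (σ i j).isLt

lemma interval_lt (hn : 0 < n) {p q : ℕ} {x y : ℝ}
    (hx : x ∈ Set.Ioc ((p:ℝ)/n) (((p:ℝ)+1)/n)) (hy : y ∈ Set.Ioc ((q:ℝ)/n) (((q:ℝ)+1)/n))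
    (h : p < q) : x < y := by
  have hn' : (0:ℝ) < n := by exact_mod_cast hn
  have h1 : ((p:ℝ)+1)/n ≤ (q:ℝ)/n := by
    gcongr
    exact_mod_cast h
  exact lt_of_le_of_lt (hx.2.trans h1) hy.1

lemma interval_lt_iff (hn : 0 < n) {p q : ℕ} {x y : ℝ}
    (hx : x ∈ Set.Ioc ((p:ℝ)/n) (((p:ℝ)+1)/n)) (hy : y ∈ Set.Ioc ((q:ℝ)/n) (((q:ℝ)+1)/n))
    (hpq : p ≠ q) : x < y ↔ p < q := by
  rcases hpq.lt_or_gt with h | h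
  · simp [interval_lt hn hx hy h, h]
  · have := interval_lt hn hy hx h
    constructor
    · intro hxy; exact absurd hxy (not_lt.2 this.le)
    · intro hh; exact absurd hh (not_lt.2 h.le)

lemma mem_Ioc_div_iff (hn : 0 < n) {m : ℕ} (hm : m < n) (x : ℝ) :
    x ∈ Set.Ioc ((m:ℝ)/n) (((m:ℝ)+1)/n) ↔
      (x ∈ Set.Ioc (0:ℝ) 1 ∧ ⌈(n:ℝ) * x⌉₊ = m + 1) := by
  have hn' : (0:ℝ) < n := by exact_mod_cast hn
  have hceil : ⌈(n:ℝ) * x⌉₊ = m + 1 ↔ ((m:ℝ) < n * x ∧ n * x ≤ (m:ℝ) + 1) := by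
    rw [Nat.ceil_eq_iff (Nat.succ_ne_zero m)]
    push_cast
    simp
  constructor
  · rintro ⟨h1, h2⟩
    rw [div_lt_iff₀ hn'] at h1
    rw [le_div_iff₀ hn'] at h2
    have hx0 : 0 < x := by nlinarith [Nat.cast_nonneg (α := ℝ) m]
    have hmn : (m:ℝ) + 1 ≤ n := by exact_mod_cast hm
    have hx1 : x ≤ 1 := by nlinarith
    exact ⟨⟨hx0, hx1⟩, hceil.2 ⟨by linarith, by linarith⟩⟩
  · rintro ⟨_, hc⟩
    have := hceil.1 hc
    rw [Set.mem_Ioc, div_lt_iff₀ hn', le_div_iff₀ hn']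
    constructor <;> nlinarith [this.1, this.2]

def permSet (σ : Fin n → Fin d → Fin n) : Set (Fin (d+1) → ℝ) :=
  {x : Fin (d+1) → ℝ |
    (∀ i, x i ∈ Set.Ioc (0:ℝ) 1) ∧
    ∃ i : Fin n, ⌈(n : ℝ) * x 0⌉₊ = (i : ℕ) + 1 ∧
      ∀ j : Fin d, ⌈(n : ℝ) * x j.succ⌉₊ = (σ i j : ℕ) + 1}

lemma permMeasure_eq (σ : Fin n → Fin d → Fin n) :
    permMeasure σ = ((n : ENNReal) ^ d) • (volume.restrict (permSet σ)) := rfl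

lemma mem_cell_iff {σ : Fin n → Fin d → Fin n} {i : Fin n} {x : Fin (d+1) → ℝ} :
    x ∈ cell σ i ↔
      ∀ l, x l ∈ Set.Ioc ((cellIdx σ i l : ℝ) / n) (((cellIdx σ i l : ℝ) + 1) / n) := by
  simp [cell, Set.mem_univ_pi]

lemma permSet_eq (hn : 0 < n) (σ : Fin n → Fin d → Fin n) :
    permSet σ = ⋃ i, cell σ i := by
  ext x
  simp only [permSet, mem_setOf_eq, mem_iUnion]
  constructor
  · rintro ⟨hbox, i, h0, hj⟩
    refine ⟨i, mem_cell_iff.2 fun l => ?_⟩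
    induction l using Fin.cases with
    | zero => exact (mem_Ioc_div_iff hn i.isLt (x 0)).2 ⟨hbox 0, by simpa [cellIdx] using h0⟩
    | succ j =>
      exact (mem_Ioc_div_iff hn (σ i j).isLt _).2 ⟨hbox j.succ, by simpa [cellIdx] using hj j⟩
  · rintro ⟨i, hc⟩
    have hbox : ∀ l, x l ∈ Set.Ioc (0:ℝ) 1 ∧ ⌈(n:ℝ) * x l⌉₊ = cellIdx σ i l + 1 := fun l =>
      (mem_Ioc_div_iff hn (cellIdx_lt σ i l) _).1 (mem_cell_iff.1 hc l)
    exact ⟨fun l => (hbox l).1, i, by simpa [cellIdx] using (hbox 0).2,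
      fun j => by simpa [cellIdx] using (hbox j.succ).2⟩

lemma measurable_cell (σ : Fin n → Fin d → Fin n) (i : Fin n) : MeasurableSet (cell σ i) :=
  MeasurableSet.univ_pi fun _ => measurableSet_Ioc

lemma measurable_permSet (hn : 0 < n) (σ : Fin n → Fin d → Fin n) :
    MeasurableSet (permSet σ) := by
  rw [permSet_eq hn]
  exact MeasurableSet.iUnion fun i => measurable_cell σ i

lemma volume_cell (hn : 0 < n) (σ : Fin n → Fin d → Fin n) (i : Fin n) :
    volume (cell σ i) = ((n : ENNReal)⁻¹) ^ (d+1) := by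
  have hn' : (0:ℝ) < n := by exact_mod_cast hn
  rw [cell, volume_pi_pi]
  have h : ∀ l : Fin (d+1),
      volume (Set.Ioc ((cellIdx σ i l : ℝ) / n) (((cellIdx σ i l : ℝ) + 1) / n))
        = (n : ENNReal)⁻¹ := by
    intro l
    rw [Real.volume_Ioc]
    have : ((cellIdx σ i l : ℝ) + 1) / n - (cellIdx σ i l : ℝ) / n = (n : ℝ)⁻¹ := by
      field_simp
      ring
    rw [this, ENNReal.ofReal_inv_of_pos hn', ENNReal.ofReal_natCast]
  simp [h]

lemma cell_disjoint (hn : 0 < n) (σ : Fin n → Fin d → Fin n) :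
    Pairwise (Function.onFun Disjoint (cell σ)) := by
  intro i i' hne
  rw [Function.onFun, Set.disjoint_left]
  intro x hx hx'
  have h0 := mem_cell_iff.1 hx 0
  have h0' := mem_cell_iff.1 hx' 0
  have hvne : (cellIdx σ i 0) ≠ (cellIdx σ i' 0) := by
    simpa [cellIdx, Fin.val_inj] using hne
  rcases hvne.lt_or_gt with h | h
  · exact absurd (interval_lt hn h0 h0' h) (lt_irrefl _)
  · exact absurd (interval_lt hn h0' h0 h) (lt_irrefl _)

lemma volume_permSet (hn : 0 < n) (σ : Fin n → Fin d → Fin n) :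
    volume (permSet σ) = (n : ENNReal) * ((n : ENNReal)⁻¹) ^ (d+1) := by
  rw [permSet_eq hn, measure_iUnion (cell_disjoint hn σ) (measurable_cell σ), tsum_fintype]
  simp [volume_cell hn σ, Finset.sum_const, mul_comm]

lemma ennreal_aux (hn : 0 < n) :
    (n : ENNReal) ^ d * ((n : ENNReal) * ((n:ENNReal)⁻¹) ^ (d+1)) = 1 := by
  have h0 : (n : ENNReal) ≠ 0 := by exact_mod_cast hn.ne'
  have ht : (n : ENNReal) ≠ ⊤ := ENNReal.natCast_ne_top n
  rw [pow_succ]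
  calc (n : ENNReal) ^ d * ((n : ENNReal) * (((n:ENNReal)⁻¹) ^ d * (n:ENNReal)⁻¹))
      = ((n : ENNReal) * (n:ENNReal)⁻¹) ^ d * ((n : ENNReal) * (n:ENNReal)⁻¹) := by
        rw [mul_pow]; ring
    _ = 1 := by rw [ENNReal.mul_inv_cancel h0 ht]; simp

lemma permMeasure_apply (σ : Fin n → Fin d → Fin n) {s : Set (Fin (d+1) → ℝ)}
    (hs : MeasurableSet s) :
    permMeasure σ s = (n : ENNReal) ^ d * volume (s ∩ permSet σ) := by
  rw [permMeasure_eq, Measure.smul_apply, Measure.restrict_apply hs, smul_eq_mul]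

lemma permMeasure_cell (hn : 0 < n) (σ : Fin n → Fin d → Fin n) (i : Fin n) :
    permMeasure σ (cell σ i) = (n : ENNReal)⁻¹ := by
  have hsub : cell σ i ⊆ permSet σ := by
    rw [permSet_eq hn]; exact subset_iUnion (cell σ) i
  rw [permMeasure_apply σ (measurable_cell σ i), Set.inter_eq_self_of_subset_left hsub,
    volume_cell hn σ i]
  have h0 : (n : ENNReal) ≠ 0 := by exact_mod_cast hn.ne'
  have ht : (n : ENNReal) ≠ ⊤ := ENNReal.natCast_ne_top n
  rw [pow_succ, ← mul_assoc, ← mul_pow, ENNReal.mul_inv_cancel h0 ht, one_pow, one_mul]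

lemma permMeasure_univ (hn : 0 < n) (σ : Fin n → Fin d → Fin n) :
    permMeasure σ Set.univ = 1 := by
  rw [permMeasure_apply σ MeasurableSet.univ, Set.univ_inter, volume_permSet hn σ,
    ennreal_aux hn]

lemma permMeasure_permSet (hn : 0 < n) (σ : Fin n → Fin d → Fin n) :
    permMeasure σ (permSet σ) = 1 := by
  rw [permMeasure_apply σ (measurable_permSet hn σ), Set.inter_self, volume_permSet hn σ,
    ennreal_aux hn]

lemma measurable_iff_lt (P : Prop) (u v : Fin k) (c c' : Fin (d+1)) :
    MeasurableSet {x : Fin k → Fin (d+1) → ℝ | (P ↔ x u c < x v c')} := by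
  classical
  have h1 : Measurable fun x : Fin k → Fin (d+1) → ℝ => x u c :=
    (measurable_pi_apply c).comp (measurable_pi_apply u)
  have h2 : Measurable fun x : Fin k → Fin (d+1) → ℝ => x v c' :=
    (measurable_pi_apply c').comp (measurable_pi_apply v)
  have hm : MeasurableSet {x : Fin k → Fin (d+1) → ℝ | x u c < x v c'} := measurableSet_lt h1 h2
  by_cases hP : P
  · simpa [hP] using hm
  · have : {x : Fin k → Fin (d+1) → ℝ | (P ↔ x u c < x v c')}
        = {x : Fin k → Fin (d+1) → ℝ | x u c < x v c'}ᶜ := by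
      ext x; simp [hP]
    rw [this]; exact hm.compl

lemma measurable_hasPattern (τ : Fin k → Fin d → Fin k) :
    MeasurableSet {x : Fin k → Fin (d+1) → ℝ | hasPattern τ x} := by
  have : {x : Fin k → Fin (d+1) → ℝ | hasPattern τ x} = ⋃ g : Equiv.Perm (Fin k),
      ((⋂ a, ⋂ b, {x : Fin k → Fin (d+1) → ℝ | a < b ↔ x (g a) 0 < x (g b) 0}) ∩
       ⋂ a, ⋂ b, ⋂ j, {x : Fin k → Fin (d+1) → ℝ |
          τ a j < τ b j ↔ x (g a) j.succ < x (g b) j.succ}) := by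
    ext x
    simp [hasPattern, Set.mem_iUnion, Set.mem_iInter]
  rw [this]
  exact MeasurableSet.iUnion fun g =>
    (MeasurableSet.iInter fun a => MeasurableSet.iInter fun b =>
      measurable_iff_lt _ _ _ _ _).inter
    (MeasurableSet.iInter fun a => MeasurableSet.iInter fun b => MeasurableSet.iInter fun j =>
      measurable_iff_lt _ _ _ _ _)

/-- The deterministic condition on `f` equivalent to the pattern event on the cell product. -/
def Cond (τ : Fin k → Fin d → Fin k) (σ : Fin n → Fin d → Fin n) (f : Fin k → Fin n) : Prop :=
  ∃ g : Equiv.Perm (Fin k), StrictMono (f ∘ ⇑g) ∧ IsPatternOf τ σ (f ∘ ⇑g)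

lemma hasPattern_iff_cond (hn : 0 < n) {τ : Fin k → Fin d → Fin k}
    {σ : Fin n → Fin d → Fin n} (hσ : IsDPerm σ) {f : Fin k → Fin n}
    (hf : Function.Injective f) {x : Fin k → Fin (d+1) → ℝ}
    (hx : ∀ m, x m ∈ cell σ (f m)) :
    hasPattern τ x ↔ Cond τ σ f := by
  have hdiff : ∀ m m' : Fin k, m ≠ m' → ∀ l, cellIdx σ (f m) l ≠ cellIdx σ (f m') l := by
    intro m m' hmm' l
    have hff : f m ≠ f m' := fun h => hmm' (hf h)
    induction l using Fin.cases with
    | zero => simpa [cellIdx_zero, Fin.val_inj] using hff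
    | succ j =>
      have : σ (f m) j ≠ σ (f m') j := fun h => hff ((hσ j).1 h)
      simpa [cellIdx_succ, Fin.val_inj] using this
  have hlt : ∀ (m m' : Fin k) (l : Fin (d+1)), m ≠ m' →
      (x m l < x m' l ↔ cellIdx σ (f m) l < cellIdx σ (f m') l) := by
    intro m m' l h
    exact interval_lt_iff hn (mem_cell_iff.1 (hx m) l) (mem_cell_iff.1 (hx m') l)
      (hdiff m m' h l)
  have hltF : ∀ m m' : Fin k, m ≠ m' → (x m 0 < x m' 0 ↔ f m < f m') :=
    fun m m' h => (hlt m m' 0 h).trans Fin.lt_def.symm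
  have hltS : ∀ (m m' : Fin k) (j : Fin d), m ≠ m' →
      (x m j.succ < x m' j.succ ↔ σ (f m) j < σ (f m') j) :=
    fun m m' j h => (hlt m m' j.succ h).trans Fin.lt_def.symm
  constructor
  · rintro ⟨g, h1, h2⟩
    refine ⟨g, ?_, ?_⟩
    · intro a b hab
      have hne : g a ≠ g b := fun h => absurd (g.injective h) hab.ne
      exact (hltF (g a) (g b) hne).1 ((h1 a b).1 hab)
    · intro a b j
      rw [h2 a b j]
      by_cases hab : a = b
      · subst hab; simp
      · have hne : g a ≠ g b := fun h => hab (g.injective h)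
        simpa [Function.comp] using hltS (g a) (g b) j hne
  · rintro ⟨g, h1, h2⟩
    refine ⟨g, ?_, ?_⟩
    · intro a b
      by_cases hab : a = b
      · subst hab; simp
      · have hne : g a ≠ g b := fun h => hab (g.injective h)
        have hfl : a < b ↔ f (g a) < f (g b) := by
          constructor
          · intro h; exact h1 h
          · intro h
            rcases lt_trichotomy a b with hc | hc | hc
            · exact hc
            · exact absurd hc hab
            · exact absurd (h1 hc) (not_lt.2 h.le)
        rw [hfl]
        exact (hltF (g a) (g b) hne).symm
    · intro a b j
      rw [h2 a b j]
      by_cases hab : a = b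
      · subst hab; simp
      · have hne : g a ≠ g b := fun h => hab (g.injective h)
        simpa [Function.comp] using (hltS (g a) (g b) j hne).symm

lemma card_cond_eq (τ : Fin k → Fin d → Fin k) (σ : Fin n → Fin d → Fin n) :
    Nat.card {f : Fin k → Fin n // Function.Injective f ∧ Cond τ σ f}
      = k.factorial * Nat.card {e : Fin k → Fin n // StrictMono e ∧ IsPatternOf τ σ e} := by
  classical
  have hbij : Function.Bijective
      (fun p : ({e : Fin k → Fin n // StrictMono e ∧ IsPatternOf τ σ e} × Equiv.Perm (Fin k)) =>
        (⟨p.1.1 ∘ ⇑p.2⁻¹, by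
          exact p.1.2.1.injective.comp (Equiv.injective _), by
          refine ⟨p.2, ?_, ?_⟩
          · have he : (p.1.1 ∘ ⇑p.2⁻¹) ∘ ⇑p.2 = p.1.1 := by
              funext a; simp
            rw [he]; exact p.1.2.1
          · have he : (p.1.1 ∘ ⇑p.2⁻¹) ∘ ⇑p.2 = p.1.1 := by
              funext a; simp
            rw [he]; exact p.1.2.2⟩ :
          {f : Fin k → Fin n // Function.Injective f ∧ Cond τ σ f})) := by
    constructor
    · rintro ⟨⟨e, he⟩, g⟩ ⟨⟨e', he'⟩, g'⟩ hfe
      simp only [Subtype.mk.injEq] at hfe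
      have hrange : Set.range e = Set.range e' := by
        have h1 : Set.range (e ∘ ⇑g⁻¹) = Set.range e :=
          (Equiv.surjective g⁻¹).range_comp e
        have h2 : Set.range (e' ∘ ⇑g'⁻¹) = Set.range e' :=
          (Equiv.surjective g'⁻¹).range_comp e'
        rw [← h1, ← h2, hfe]
      have hee : e = e' := (StrictMono.range_inj he.1 he'.1).1 hrange
      subst hee
      have hgg : ⇑g⁻¹ = ⇑g'⁻¹ := by
        funext a
        exact he.1.injective (congrFun hfe a)
      have : g⁻¹ = g'⁻¹ := Equiv.coe_fn_injective hgg
      have : g = g' := by simpa using congrArg Inv.inv this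
      simp [this]
    · rintro ⟨f, hfinj, g, hmono, hpat⟩
      refine ⟨⟨⟨f ∘ ⇑g, hmono, hpat⟩, g⟩, ?_⟩
      ext a
      simp
  have := Nat.card_eq_of_bijective _ hbij
  rw [Nat.card_prod] at this
  rw [← this, mul_comm]
  congr 1
  rw [Nat.card_eq_fintype_card]
  simp [Fintype.card_perm]

lemma card_inj :
    Nat.card {f : Fin k → Fin n // Function.Injective f} = n.descFactorial k := by
  classical
  rw [Nat.card_eq_fintype_card,
    Fintype.card_congr (Equiv.subtypeInjectiveEquivEmbedding (Fin k) (Fin n)),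
    Fintype.card_embedding_eq]
  simp

lemma card_pattern_le (τ : Fin k → Fin d → Fin k) (σ : Fin n → Fin d → Fin n) :
    Nat.card {e : Fin k → Fin n // StrictMono e ∧ IsPatternOf τ σ e} ≤ n.choose k := by
  classical
  have hinj : Function.Injective
      (fun e : {e : Fin k → Fin n // StrictMono e ∧ IsPatternOf τ σ e} =>
        (⟨Finset.univ.image e.1, by
          rw [Finset.card_image_of_injective _ e.2.1.injective]; simp⟩ :
          {s : Finset (Fin n) // s.card = k})) := by
    rintro ⟨e, he⟩ ⟨e', he'⟩ h
    simp only [Subtype.mk.injEq] at h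
    have hr : Set.range e = Set.range e' := by
      rw [← Set.image_univ, ← Set.image_univ, ← Finset.coe_univ]
      rw [← Finset.coe_image, ← Finset.coe_image, h]
    exact Subtype.ext ((StrictMono.range_inj he.1 he'.1).1 hr)
  calc Nat.card {e : Fin k → Fin n // StrictMono e ∧ IsPatternOf τ σ e}
      ≤ Nat.card {s : Finset (Fin n) // s.card = k} := Nat.card_le_card_of_injective _ hinj
    _ = n.choose k := by rw [Nat.card_eq_fintype_card, Fintype.card_finset_len]; simp

lemma pow_le_desc_add :
    ∀ kk : ℕ, kk ≤ n → n ^ kk ≤ n.descFactorial kk + kk.choose 2 * n ^ (kk - 1)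
  | 0, _ => by simp
  | (kk+1), h => by
    have hk' : kk ≤ n := Nat.le_of_succ_le h
    have ih := pow_le_desc_add kk hk'
    rcases Nat.eq_zero_or_pos kk with hk0 | hk0
    · subst hk0; simp
    · have h1 : n ^ (kk + 1) ≤ n * n.descFactorial kk + kk.choose 2 * (n * n ^ (kk - 1)) := by
        rw [pow_succ, mul_comm (n ^ kk) n]
        calc n * n ^ kk ≤ n * (n.descFactorial kk + kk.choose 2 * n ^ (kk - 1)) :=
              Nat.mul_le_mul_left n ih
          _ = n * n.descFactorial kk + kk.choose 2 * (n * n ^ (kk - 1)) := by ring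
      have h2 : n * n ^ (kk - 1) = n ^ kk := by
        rw [← pow_succ']
        congr 1
        omega
      have h3 : n * n.descFactorial kk = n.descFactorial (kk + 1) + kk * n.descFactorial kk := by
        rw [Nat.descFactorial_succ]
        have hs : n - kk + kk = n := Nat.sub_add_cancel hk'
        calc n * n.descFactorial kk = (n - kk + kk) * n.descFactorial kk := by rw [hs]
          _ = (n - kk) * n.descFactorial kk + kk * n.descFactorial kk := by ring
      have h4 : kk * n.descFactorial kk ≤ kk * n ^ kk :=
        Nat.mul_le_mul_left kk (Nat.descFactorial_le_pow n kk)
      have h5 : (kk + 1).choose 2 = kk.choose 2 + kk := by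
        rw [Nat.choose_succ_succ]
        simp [Nat.choose_one_right, Nat.add_comm]
      calc n ^ (kk + 1) ≤ n * n.descFactorial kk + kk.choose 2 * n ^ kk := by rw [← h2]; exact h1
        _ = n.descFactorial (kk + 1) + kk * n.descFactorial kk + kk.choose 2 * n ^ kk := by
            rw [h3]
        _ ≤ n.descFactorial (kk + 1) + kk * n ^ kk + kk.choose 2 * n ^ kk := by
            omega
        _ = n.descFactorial (kk + 1) + (kk + 1).choose 2 * n ^ ((kk + 1) - 1) := by
            rw [h5, Nat.succ_sub_one]; ring

lemma final_real {fp r p key : ℝ} (hA1 : fp * p ≤ r) (hA2 : r ≤ fp * p + (1 - p))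
    (hfp0 : 0 ≤ fp) (hfp1 : fp ≤ 1) (hp0 : 0 ≤ p) (hkey : 1 - p ≤ key) :
    |fp - r| ≤ key := by
  rw [abs_sub_le_iff]
  constructor
  · nlinarith [mul_nonneg hfp0 (by linarith : (0:ℝ) ≤ 1 - p)]
  · nlinarith [mul_nonneg (by linarith : (0:ℝ) ≤ 1 - fp) (by linarith : (0:ℝ) ≤ 1 - p)]

end PermutonAux

/-- For a `(d+1)`-dimensional permutation `τ` of size `k` and `σ` of size `n ≥ k`, the
pattern frequencies of `τ` in `σ` and in the associated permuton `μ_σ` differ by at most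
`(k choose 2)/n`. -/


theorem abs_freqPerm_sub_freqMeas_le {d k n : ℕ} (hk : 1 ≤ k) (hkn : k ≤ n)
    (τ : Fin k → Fin d → Fin k) (σ : Fin n → Fin d → Fin n)
    (hτ : IsDPerm τ) (hσ : IsDPerm σ) :
    |freqPerm τ σ - freqMeas τ (permMeasure σ)| ≤ (k.choose 2 : ℝ) / n := by
  classical
  open PermutonAux in
  have hn : 0 < n := lt_of_lt_of_le hk hkn
  haveI hprob : IsProbabilityMeasure (permMeasure σ) := ⟨PermutonAux.permMeasure_univ hn σ⟩
  set π := Measure.pi (fun _ : Fin k => permMeasure σ) with hπdef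
  set A := {x : Fin k → Fin (d+1) → ℝ | hasPattern τ x} with hAdef
  have hAmeas : MeasurableSet A := PermutonAux.measurable_hasPattern τ
  set B : (Fin k → Fin n) → Set (Fin k → Fin (d+1) → ℝ) :=
    fun f => Set.pi Set.univ fun m => PermutonAux.cell σ (f m) with hBdef
  have hBmeas : ∀ f, MeasurableSet (B f) :=
    fun f => MeasurableSet.univ_pi fun m => PermutonAux.measurable_cell σ (f m)
  set c : ENNReal := ((n : ENNReal)⁻¹) ^ k with hcdef
  have hBval : ∀ f, π (B f) = c := by
    intro f
    rw [hπdef, hBdef, Measure.pi_pi]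
    simp [PermutonAux.permMeasure_cell hn σ, hcdef]
  have hBdisj : Pairwise (Function.onFun Disjoint B) := by
    intro f f' hff'
    obtain ⟨m, hm⟩ := Function.ne_iff.1 hff'
    rw [Function.onFun, Set.disjoint_left]
    intro x hxf hxf'
    have h1 : x m ∈ PermutonAux.cell σ (f m) := Set.mem_univ_pi.1 hxf m
    have h2 : x m ∈ PermutonAux.cell σ (f' m) := Set.mem_univ_pi.1 hxf' m
    exact Set.disjoint_left.1 (PermutonAux.cell_disjoint hn σ hm) h1 h2
  have hUnion : ⋃ f : Fin k → Fin n, B f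
      = Set.pi Set.univ (fun _ : Fin k => PermutonAux.permSet σ) := by
    ext x
    simp only [Set.mem_iUnion, Set.mem_univ_pi, hBdef, PermutonAux.permSet_eq hn σ]
    constructor
    · rintro ⟨f, hf⟩ m
      exact ⟨f m, hf m⟩
    · intro h
      choose f hf using h
      exact ⟨f, hf⟩
  have hUmeas : MeasurableSet (⋃ f : Fin k → Fin n, B f) :=
    MeasurableSet.iUnion fun f => hBmeas f
  have hU1 : π (⋃ f : Fin k → Fin n, B f) = 1 := by
    rw [hUnion, hπdef, Measure.pi_pi]
    simp [PermutonAux.permMeasure_permSet hn σ]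
  have hπA : π A = ∑ f : Fin k → Fin n, π (A ∩ B f) := by
    have hcompl : π (⋃ f : Fin k → Fin n, B f)ᶜ = 0 := by
      rw [measure_compl hUmeas (measure_ne_top _ _), hU1, measure_univ, tsub_self]
    have hnull : π (A \ ⋃ f : Fin k → Fin n, B f) = 0 :=
      measure_mono_null (fun x hx => hx.2) hcompl
    calc π A = π (A ∩ ⋃ f : Fin k → Fin n, B f) + π (A \ ⋃ f : Fin k → Fin n, B f) :=
          (measure_inter_add_diff A hUmeas).symm
      _ = π (A ∩ ⋃ f : Fin k → Fin n, B f) := by rw [hnull, add_zero]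
      _ = ∑ f : Fin k → Fin n, π (A ∩ B f) := by
          rw [Set.inter_iUnion,
            measure_iUnion
              (fun f f' h =>
                ((hBdisj h).mono Set.inter_subset_right Set.inter_subset_right))
              (fun f => hAmeas.inter (hBmeas f)),
            tsum_fintype]
  have hgood : ∀ f : Fin k → Fin n, Function.Injective f → PermutonAux.Cond τ σ f →
      π (A ∩ B f) = c := by
    intro f hfi hfc
    have hsub : B f ⊆ A := by
      intro x hx
      exact (PermutonAux.hasPattern_iff_cond hn hσ hfi
        (fun m => Set.mem_univ_pi.1 hx m)).2 hfc
    rw [Set.inter_eq_self_of_subset_right hsub, hBval]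
  have hbad : ∀ f : Fin k → Fin n, Function.Injective f → ¬ PermutonAux.Cond τ σ f →
      π (A ∩ B f) = 0 := by
    intro f hfi hfc
    have hemp : A ∩ B f = ∅ := by
      ext x
      simp only [Set.mem_inter_iff, Set.mem_empty_iff_false, iff_false, not_and]
      intro hxA hxB
      exact hfc ((PermutonAux.hasPattern_iff_cond hn hσ hfi
        (fun m => Set.mem_univ_pi.1 hxB m)).1 hxA)
    rw [hemp, measure_empty]
  have hle : ∀ f : Fin k → Fin n, π (A ∩ B f) ≤ c :=
    fun f => le_trans (measure_mono Set.inter_subset_right) (hBval f).le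
  -- counting
  set N : ℕ := (Finset.univ.filter
    fun f : Fin k → Fin n => Function.Injective f ∧ PermutonAux.Cond τ σ f).card with hNdef
  set G : ℕ := Nat.card {e : Fin k → Fin n // StrictMono e ∧ IsPatternOf τ σ e} with hGdef
  have hNG : N = k.factorial * G := by
    rw [hNdef, ← Fintype.card_subtype, ← Nat.card_eq_fintype_card, hGdef]
    exact PermutonAux.card_cond_eq τ σ
  set D : ℕ := n.descFactorial k with hDdef
  have hIcard : (Finset.univ.filter fun f : Fin k → Fin n => Function.Injective f).card = D := by
    rw [← Fintype.card_subtype, ← Nat.card_eq_fintype_card, hDdef]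
    exact PermutonAux.card_inj
  have huniv : (Finset.univ : Finset (Fin k → Fin n)).card = n ^ k := by
    rw [Finset.card_univ, Fintype.card_fun]
    simp
  have hMcard : (Finset.univ.filter
      fun f : Fin k → Fin n => ¬ Function.Injective f).card = n ^ k - D := by
    have h := Finset.card_filter_add_card_filter_not
      (s := (Finset.univ : Finset (Fin k → Fin n)))
      (p := fun f : Fin k → Fin n => Function.Injective f)
    omega
  have hsplit : π A = (N : ENNReal) * c
      + ∑ f ∈ Finset.univ.filter (fun f : Fin k → Fin n => ¬ Function.Injective f),
          π (A ∩ B f) := by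
    rw [hπA, ← Finset.sum_filter_add_sum_filter_not Finset.univ
      (fun f : Fin k → Fin n => Function.Injective f)]
    congr 1
    have hcongr : ∀ f ∈ Finset.univ.filter (fun f : Fin k → Fin n => Function.Injective f),
        π (A ∩ B f) = if PermutonAux.Cond τ σ f then c else 0 := by
      intro f hf
      rw [Finset.mem_filter] at hf
      by_cases hcf : PermutonAux.Cond τ σ f
      · rw [if_pos hcf]; exact hgood f hf.2 hcf
      · rw [if_neg hcf]; exact hbad f hf.2 hcf
    rw [Finset.sum_congr rfl hcongr, Finset.sum_ite, Finset.sum_const, Finset.sum_const_zero,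
      add_zero, Finset.filter_filter, nsmul_eq_mul]
  have hrest : ∑ f ∈ Finset.univ.filter (fun f : Fin k → Fin n => ¬ Function.Injective f),
      π (A ∩ B f) ≤ ((n ^ k - D : ℕ) : ENNReal) * c := by
    calc ∑ f ∈ Finset.univ.filter (fun f : Fin k → Fin n => ¬ Function.Injective f),
        π (A ∩ B f)
        ≤ ∑ _f ∈ Finset.univ.filter (fun f : Fin k → Fin n => ¬ Function.Injective f), c :=
          Finset.sum_le_sum fun f _ => hle f
      _ = ((n ^ k - D : ℕ) : ENNReal) * c := by
          rw [Finset.sum_const, hMcard, nsmul_eq_mul]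
  have hlow : (N : ENNReal) * c ≤ π A := by
    rw [hsplit]; exact le_self_add
  have hup : π A ≤ (N : ENNReal) * c + ((n ^ k - D : ℕ) : ENNReal) * c := by
    rw [hsplit]
    exact add_le_add (le_refl _) hrest
  -- convert to real numbers
  have hcreal : c.toReal = ((n:ℝ)⁻¹) ^ k := by
    rw [hcdef, ENNReal.toReal_pow, ENNReal.toReal_inv]
    simp
  have hfin : π A ≠ ⊤ := measure_ne_top _ _
  have hcnetop : c ≠ ⊤ := by
    rw [hcdef]
    exact ENNReal.pow_ne_top (ENNReal.inv_ne_top.2 (by exact_mod_cast hn.ne'))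
  have hlowR : (N : ℝ) * ((n:ℝ)⁻¹) ^ k ≤ (π A).toReal := by
    have h := ENNReal.toReal_mono hfin hlow
    rwa [ENNReal.toReal_mul, ENNReal.toReal_natCast, hcreal] at h
  have hupR : (π A).toReal
      ≤ (N : ℝ) * ((n:ℝ)⁻¹) ^ k + ((n ^ k - D : ℕ) : ℝ) * ((n:ℝ)⁻¹) ^ k := by
    have hne : (N : ENNReal) * c + ((n ^ k - D : ℕ) : ENNReal) * c ≠ ⊤ := by
      apply ENNReal.add_ne_top.2
      constructor <;> exact ENNReal.mul_ne_top (ENNReal.natCast_ne_top _) hcnetop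
    have h := ENNReal.toReal_mono hne hup
    rwa [ENNReal.toReal_add (ENNReal.mul_ne_top (ENNReal.natCast_ne_top _) hcnetop)
        (ENNReal.mul_ne_top (ENNReal.natCast_ne_top _) hcnetop),
      ENNReal.toReal_mul, ENNReal.toReal_mul, ENNReal.toReal_natCast,
      ENNReal.toReal_natCast, hcreal] at h
  -- final real arithmetic
  have hfm : freqMeas τ (permMeasure σ) = (π A).toReal := rfl
  have hfp : freqPerm τ σ = (G : ℝ) / (n.choose k : ℝ) := rfl
  set r : ℝ := (π A).toReal with hrdef
  set fp : ℝ := (G : ℝ) / (n.choose k : ℝ) with hfpdef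
  have hDle : D ≤ n ^ k := Nat.descFactorial_le_pow n k
  have hnR : (0:ℝ) < n := by exact_mod_cast hn
  have hpowpos : (0:ℝ) < (n:ℝ) ^ k := by positivity
  have hsubcast : ((n ^ k - D : ℕ) : ℝ) = (n:ℝ) ^ k - (D:ℝ) := by
    rw [Nat.cast_sub hDle]
    push_cast
    ring
  have hCpos : 0 < (n.choose k : ℝ) := by exact_mod_cast Nat.choose_pos hkn
  have hDC : (D : ℝ) = (k.factorial : ℝ) * (n.choose k : ℝ) := by
    rw [hDdef]
    exact_mod_cast Nat.descFactorial_eq_factorial_mul_choose n k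
  set p : ℝ := (D : ℝ) / (n:ℝ) ^ k with hpdef
  have hNval : (N : ℝ) * ((n:ℝ)⁻¹) ^ k = fp * p := by
    rw [hNG, hfpdef, hpdef, hDC]
    push_cast
    rw [inv_pow]
    field_simp
  have hMval : ((n ^ k - D : ℕ) : ℝ) * ((n:ℝ)⁻¹) ^ k = 1 - p := by
    rw [hsubcast, hpdef, inv_pow]
    field_simp
  have hA1 : fp * p ≤ r := by rw [← hNval]; exact hlowR
  have hA2 : r ≤ fp * p + (1 - p) := by
    rw [← hNval, ← hMval]; exact hupR
  have hfp0 : 0 ≤ fp := by positivity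
  have hGle : G ≤ n.choose k := PermutonAux.card_pattern_le τ σ
  have hfp1 : fp ≤ 1 := by
    rw [hfpdef, div_le_one hCpos]
    exact_mod_cast hGle
  have hp0 : 0 ≤ p := by positivity
  have hp1 : p ≤ 1 := by
    rw [hpdef, div_le_one hpowpos]
    exact_mod_cast hDle
  have hkey : 1 - p ≤ (k.choose 2 : ℝ) / n := by
    have hnat := PermutonAux.pow_le_desc_add k hkn
    have hcast : ((n:ℝ)) ^ k ≤ (D : ℝ) + (k.choose 2 : ℝ) * (n:ℝ) ^ (k - 1) := by
      rw [hDdef]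
      exact_mod_cast hnat
    have hpow1 : (n:ℝ) ^ (k - 1) * n = (n:ℝ) ^ k := by
      rw [← pow_succ]
      congr 1
      omega
    rw [sub_le_iff_le_add, hpdef, div_add_div _ _ (ne_of_gt hnR) (ne_of_gt hpowpos)]
    rw [le_div_iff₀ (by positivity)]
    nlinarith [hcast, hpow1]
  rw [hfm, hfp]
  exact PermutonAux.final_real hA1 hA2 hfp0 hfp1 hp0 hkey
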